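/- Let F be a field of characteristic 2 and α, β, γ, δ ∈ F× with γδ(z²γ + w²δ) ≠ 0 and z²γ + w²δ + v²γδ ≠ 0 for z, w, v ∈ F. Then {γ, δ}₂ = {z²γ + w²δ + v²γδ, γδ(z²γ + w²δ)}₂ in K₂(F)/2K₂(F). -/

import Mathlib

namespace Milnor

variable (F : Type*) [Field F]

/-- Relations defining the Milnor K-group `K_n(F)`: multiplicativity in each
slot and the Steinberg relation. -/
def rels (n : ℕ) : AddSubgroup (FreeAbelianGroup (Fin n → Fˣ)) :=
  AddSubgroup.closure
    ({ x | ∃ (i : Fin n) (u v w : Fin n → Fˣ),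
        (∀ j, j ≠ i → u j = v j ∧ u j = w j) ∧ w i = u i * v i ∧
        x = FreeAbelianGroup.of w - FreeAbelianGroup.of u - FreeAbelianGroup.of v } ∪
     { x | ∃ (i j : Fin n) (u : Fin n → Fˣ), i ≠ j ∧ (u i : F) + (u j : F) = 1 ∧
        x = FreeAbelianGroup.of u })

/-- The Milnor K-group `K_n(F)`. -/
def K (n : ℕ) := FreeAbelianGroup (Fin n → Fˣ) ⧸ rels F n

instance (n : ℕ) : AddCommGroup (K F n) :=
  QuotientAddGroup.Quotient.addCommGroup _

/-- The subgroup `2^m K_n(F)` of `K_n(F)`. -/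
def modSub (n m : ℕ) : AddSubgroup (K F n) :=
  AddSubgroup.closure { x | ∃ y : K F n, x = (2 ^ m) • y }

/-- The quotient `K_n(F)/2^m K_n(F)`. -/
def KMod (n m : ℕ) := K F n ⧸ modSub F n m

instance (n m : ℕ) : AddCommGroup (KMod F n m) :=
  QuotientAddGroup.Quotient.addCommGroup _

variable {F}

/-- The class of the symbol `{v 0, …, v (n-1)}` in `K_n(F)/2^m K_n(F)`. -/
def symbol {n : ℕ} (m : ℕ) (v : Fin n → Fˣ) : KMod F n m :=
  QuotientAddGroup.mk (QuotientAddGroup.mk (FreeAbelianGroup.of v) : K F n)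

open scoped Classical in
/-- `{a,b}` in `K₂(F)/2^m K₂(F)` for field elements, with junk value `0` if an
entry vanishes.  So `s2 1 a b` is `{a,b}₂` and `s2 2 a b` is `{a,b}₄`. -/
noncomputable def s2 (m : ℕ) (a b : F) : KMod F 2 m :=
  if h : a ≠ 0 ∧ b ≠ 0 then symbol m ![Units.mk0 a h.1, Units.mk0 b h.2] else 0

open scoped Classical in
/-- `{a,b,c,d}` in `K₄(F)/2^m K₄(F)` for field elements, junk value `0`. -/
noncomputable def s4 (m : ℕ) (a b c d : F) : KMod F 4 m :=
  if h : a ≠ 0 ∧ b ≠ 0 ∧ c ≠ 0 ∧ d ≠ 0 then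
    symbol m ![Units.mk0 a h.1, Units.mk0 b h.2.1, Units.mk0 c h.2.2.1, Units.mk0 d h.2.2.2]
  else 0

end Milnor

open Milnor

namespace Milnor

set_option linter.unusedSectionVars false

variable {F : Type*} [Field F]

lemma kmod_add_self {n : ℕ} (x : KMod F n 1) : x + x = 0 := by
  induction x using QuotientAddGroup.induction_on with
  | H y =>
    change (QuotientAddGroup.mk (y + y) : K F n ⧸ modSub F n 1) = 0
    exact (QuotientAddGroup.eq_zero_iff _).2
      (AddSubgroup.subset_closure ⟨y, by rw [pow_one, two_smul]⟩)

lemma kmod_neg_eq {n : ℕ} (x : KMod F n 1) : -x = x :=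
  neg_eq_of_add_eq_zero_left (kmod_add_self x)

lemma kmod_eq_of_add_eq_zero {n : ℕ} {x y : KMod F n 1} (h : x + y = 0) : x = y := by
  rw [← kmod_neg_eq y]; exact eq_neg_of_add_eq_zero_left h

lemma symbol_rel {n m : ℕ} {x : FreeAbelianGroup (Fin n → Fˣ)} (hx : x ∈ rels F n) :
    (QuotientAddGroup.mk (QuotientAddGroup.mk x : K F n) : KMod F n m) = 0 := by
  rw [(QuotientAddGroup.eq_zero_iff x).2 hx]
  exact QuotientAddGroup.mk_zero _

/-- shorthand for the 2-symbol on units -/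
def sy (m : ℕ) (a b : Fˣ) : KMod F 2 m := symbol m ![a, b]

lemma sy_mul_left (m : ℕ) (a a' b : Fˣ) :
    sy m (a * a') b = sy m a b + sy m a' b := by
  have h : (FreeAbelianGroup.of ![a * a', b] - FreeAbelianGroup.of ![a, b]
      - FreeAbelianGroup.of ![a', b]) ∈ rels F 2 := by
    apply AddSubgroup.subset_closure
    left
    refine ⟨0, ![a, b], ![a', b], ![a * a', b], ?_, rfl, rfl⟩
    intro j hj
    fin_cases j
    · exact absurd rfl hj
    · exact ⟨rfl, rfl⟩
  have h2 := symbol_rel (m := m) h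
  have h3 : (sy m (a * a') b : KMod F 2 m) - sy m a b - sy m a' b = 0 := h2
  rw [sub_sub, sub_eq_zero] at h3
  exact h3

lemma sy_mul_right (m : ℕ) (a b b' : Fˣ) :
    sy m a (b * b') = sy m a b + sy m a b' := by
  have h : (FreeAbelianGroup.of ![a, b * b'] - FreeAbelianGroup.of ![a, b]
      - FreeAbelianGroup.of ![a, b']) ∈ rels F 2 := by
    apply AddSubgroup.subset_closure
    left
    refine ⟨1, ![a, b], ![a, b'], ![a, b * b'], ?_, rfl, rfl⟩
    intro j hj
    fin_cases j
    · exact ⟨rfl, rfl⟩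
    · exact absurd rfl hj
  have h2 := symbol_rel (m := m) h
  have h3 : (sy m a (b * b') : KMod F 2 m) - sy m a b - sy m a b' = 0 := h2
  rw [sub_sub, sub_eq_zero] at h3
  exact h3

lemma sy_steinberg (m : ℕ) (a b : Fˣ) (h : (a : F) + b = 1) : sy m a b = 0 := by
  apply symbol_rel
  apply AddSubgroup.subset_closure
  right
  exact ⟨0, 1, ![a, b], by decide, by simpa using h, rfl⟩

lemma sy_one_left (m : ℕ) (b : Fˣ) : sy (F := F) m 1 b = 0 := by
  have := sy_mul_left (F := F) m 1 1 b
  rw [one_mul] at this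
  exact (left_eq_add.mp this)

lemma sy_one_right (m : ℕ) (a : Fˣ) : sy (F := F) m a 1 = 0 := by
  have := sy_mul_right (F := F) m a 1 1
  rw [one_mul] at this
  exact (left_eq_add.mp this)

lemma sy_inv_left (m : ℕ) (a b : Fˣ) : sy (F := F) m a⁻¹ b = -sy m a b := by
  have := sy_mul_left m a a⁻¹ b
  rw [mul_inv_cancel, sy_one_left] at this
  exact eq_neg_of_add_eq_zero_right this.symm

lemma sy_inv_right (m : ℕ) (a b : Fˣ) : sy (F := F) m a b⁻¹ = -sy m a b := by
  have := sy_mul_right m a b b⁻¹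
  rw [mul_inv_cancel, sy_one_right] at this
  exact eq_neg_of_add_eq_zero_right this.symm

lemma sy_inv_left' (a b : Fˣ) : sy (F := F) 1 a⁻¹ b = sy 1 a b := by
  rw [sy_inv_left, kmod_neg_eq]

lemma sy_inv_right' (a b : Fˣ) : sy (F := F) 1 a b⁻¹ = sy 1 a b := by
  rw [sy_inv_right, kmod_neg_eq]

lemma sy_sq_left (u b : Fˣ) : sy (F := F) 1 (u * u) b = 0 := by
  rw [sy_mul_left]; exact kmod_add_self _

lemma sy_sq_right (a u : Fˣ) : sy (F := F) 1 a (u * u) = 0 := by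
  rw [sy_mul_right]; exact kmod_add_self _

variable [CharP F 2]

lemma sy_self (a : Fˣ) : sy (F := F) 1 a a = 0 := by
  by_cases ha : a = 1
  · rw [ha]; exact sy_one_left 1 1
  · have haF : (a : F) ≠ 1 := fun h => ha (Units.ext h)
    have h1a : (1 : F) + a ≠ 0 := by
      intro h
      have : (a : F) = -1 := eq_neg_of_add_eq_zero_right h
      rw [CharTwo.neg_eq] at this
      exact haF this
    have h1ai : (1 : F) + (a⁻¹ : Fˣ) ≠ 0 := by
      intro h
      have : ((a⁻¹ : Fˣ) : F) = -1 := eq_neg_of_add_eq_zero_right h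
      rw [CharTwo.neg_eq] at this
      have : (a⁻¹ : Fˣ) = 1 := Units.ext (by simpa using this)
      rw [inv_eq_one] at this
      exact ha this
    set c : Fˣ := Units.mk0 ((1 : F) + a) h1a with hc
    set c' : Fˣ := Units.mk0 ((1 : F) + (a⁻¹ : Fˣ)) h1ai with hc'
    have hcc : c = a * c' := by
      ext
      show (1 : F) + a = a * ((1 : F) + (a⁻¹ : Fˣ))
      rw [mul_add, mul_one, Units.mul_inv, add_comm]
    have st1 : sy 1 a c = 0 := by
      apply sy_steinberg
      show (a : F) + ((1 : F) + a) = 1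
      rw [← add_assoc, add_comm (a : F) 1, add_assoc, CharTwo.add_self_eq_zero, add_zero]
    have st2 : sy 1 a⁻¹ c' = 0 := by
      apply sy_steinberg
      show ((a⁻¹ : Fˣ) : F) + ((1 : F) + (a⁻¹ : Fˣ)) = 1
      rw [← add_assoc, add_comm ((a⁻¹ : Fˣ) : F) 1, add_assoc, CharTwo.add_self_eq_zero,
        add_zero]
    have hac' : sy (F := F) 1 a c' = 0 := (sy_inv_left' a c').symm.trans st2
    rw [hcc, sy_mul_right, hac', add_zero] at st1
    exact st1

lemma sy_comm (a b : Fˣ) : sy (F := F) 1 a b = sy 1 b a := by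
  have h := sy_self (F := F) (a * b)
  rw [sy_mul_left, sy_mul_right, sy_mul_right, sy_self, sy_self, zero_add, add_zero] at h
  exact kmod_eq_of_add_eq_zero h

lemma sy_key (a b t : Fˣ) (x y : F) (ht : (t : F) = x ^ 2 * a + y ^ 2 * b) :
    sy (F := F) 1 a b = sy 1 t a + sy 1 t b := by
  by_cases hx : x = 0
  · have hy : y ≠ 0 := by
      intro hy
      apply t.ne_zero
      rw [ht, hx, hy]; ring
    have hteq : t = (Units.mk0 y hy * Units.mk0 y hy) * b := by
      ext
      show (t : F) = y * y * b
      rw [ht, hx]; ring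
    have e1 : sy (F := F) 1 t a = sy 1 b a := by
      rw [hteq, sy_mul_left, sy_sq_left, zero_add]
    have e2 : sy (F := F) 1 t b = 0 := by
      rw [hteq, sy_mul_left, sy_sq_left, zero_add, sy_self]
    rw [e1, e2, add_zero, sy_comm]
  · by_cases hy : y = 0
    · have hteq : t = (Units.mk0 x hx * Units.mk0 x hx) * a := by
        ext
        show (t : F) = x * x * a
        rw [ht, hy]; ring
      have e1 : sy (F := F) 1 t a = 0 := by
        rw [hteq, sy_mul_left, sy_sq_left, zero_add, sy_self]
      have e2 : sy (F := F) 1 t b = sy 1 a b := by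
        rw [hteq, sy_mul_left, sy_sq_left, zero_add]
      rw [e1, e2, zero_add]
    · set ux : Fˣ := Units.mk0 x hx with hux
      set uy : Fˣ := Units.mk0 y hy with huy
      set p : Fˣ := (ux * ux) * (a * t⁻¹) with hp
      set q : Fˣ := (uy * uy) * (b * t⁻¹) with hq
      have hpq : (p : F) + q = 1 := by
        rw [hp, hq]
        push_cast [hux, huy]
        field_simp
        simp only [Units.val_mk0]
        linear_combination -ht
      have st : sy (F := F) 1 p q = 0 := sy_steinberg 1 p q hpq
      have e1 : sy (F := F) 1 p q = sy 1 a q + sy 1 t q := by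
        rw [hp, sy_mul_left, sy_sq_left, zero_add, sy_mul_left, sy_inv_left']
      have e2 : sy (F := F) 1 a q = sy 1 a b + sy 1 a t := by
        rw [hq, sy_mul_right, sy_sq_right, zero_add, sy_mul_right, sy_inv_right']
      have e3 : sy (F := F) 1 t q = sy 1 t b := by
        rw [hq, sy_mul_right, sy_sq_right, zero_add, sy_mul_right, sy_inv_right',
          sy_self, add_zero]
      rw [e1, e2, e3, add_assoc] at st
      have := kmod_eq_of_add_eq_zero st
      rw [this, sy_comm a t]

end Milnor

/-- `{γ,δ}₂ = {z²γ + w²δ + v²γδ, γδ(z²γ + w²δ)}₂` whenever the two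
displayed scalars are nonzero. -/
theorem stmt2 (F : Type*) [Field F] [CharP F 2] (α β γ δ z w v : F)
    (hα : α ≠ 0) (hβ : β ≠ 0) (hγ : γ ≠ 0) (hδ : δ ≠ 0)
    (h1 : γ * δ * (z ^ 2 * γ + w ^ 2 * δ) ≠ 0)
    (h2 : z ^ 2 * γ + w ^ 2 * δ + v ^ 2 * γ * δ ≠ 0) :
    s2 1 γ δ =
      s2 1 (z ^ 2 * γ + w ^ 2 * δ + v ^ 2 * γ * δ) (γ * δ * (z ^ 2 * γ + w ^ 2 * δ)) := by
  classical
  have ht0 : (z ^ 2 * γ + w ^ 2 * δ) ≠ 0 := fun h => h1 (by rw [h, mul_zero])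
  set ug : Fˣ := Units.mk0 γ hγ with hug
  set ud : Fˣ := Units.mk0 δ hδ with hud
  set ut : Fˣ := Units.mk0 _ ht0 with hut
  set us : Fˣ := Units.mk0 _ h2 with hus
  set uprod : Fˣ := Units.mk0 _ h1 with huprod
  have key1 : s2 1 γ δ = sy (F := F) 1 ug ud := by
    simp only [s2]
    rw [dif_pos (show γ ≠ 0 ∧ δ ≠ 0 from ⟨hγ, hδ⟩)]
    rfl
  have key2 : s2 1 (z ^ 2 * γ + w ^ 2 * δ + v ^ 2 * γ * δ)
      (γ * δ * (z ^ 2 * γ + w ^ 2 * δ)) = sy (F := F) 1 us uprod := by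
    simp only [s2]
    rw [dif_pos (show (z ^ 2 * γ + w ^ 2 * δ + v ^ 2 * γ * δ) ≠ 0 ∧
      (γ * δ * (z ^ 2 * γ + w ^ 2 * δ)) ≠ 0 from ⟨h2, h1⟩)]
    rfl
  have step1 : sy (F := F) 1 ug ud = sy 1 ut ug + sy 1 ut ud :=
    sy_key ug ud ut z w rfl
  have step2 : sy (F := F) 1 ut (ug * ud) = sy 1 us ut + sy 1 us (ug * ud) :=
    sy_key ut (ug * ud) us 1 v (by
      show (z ^ 2 * γ + w ^ 2 * δ + v ^ 2 * γ * δ : F)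
        = 1 ^ 2 * (z ^ 2 * γ + w ^ 2 * δ) + v ^ 2 * (γ * δ)
      ring)
  have hprod_eq : uprod = ug * (ud * ut) := by
    ext
    show (γ * δ * (z ^ 2 * γ + w ^ 2 * δ) : F) = γ * (δ * (z ^ 2 * γ + w ^ 2 * δ))
    ring
  rw [key1, key2, step1, ← sy_mul_right, step2, hprod_eq, sy_mul_right, sy_mul_right,
    sy_mul_right]
  abel
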